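/- arXiv:1302.7262 — 5 statements merged into one kernel-verified Lean document; each statement's English description precedes it below -/
import Mathlib

section
/- Let P_b = Z₀ ++ reverse(Z₁) where Z₀ and Z₁ are the ascending sequences of positions of zeros and ones respectively in the extended binary B* of length 2n+1. Then for 1 ≤ i ≤ n, the (n+1+i)-th element of P_b equals n−i+1; in particular, the last n elements of P_b, read from right to left, are 1, 2, ..., n. -/
/-- Binary representation of `ω`, most significant bit first. -/
def binRep (ω : ℕ) : List Bool := (Nat.bits ω).reverse

/-- The extended binary `B*`: `n` ones, then the one's complement of `B`, then a zero. -/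
def extBin (ω : ℕ) : List Bool :=
  List.replicate (binRep ω).length true ++ (binRep ω).map (!·) ++ [false]

/-- Ascending list of 1-indexed positions of bit `b` in the bit string `l`. -/
def posOf (l : List Bool) (b : Bool) : List ℕ :=
  ((List.range l.length).filter (fun i => l.getD i false == b)).map (· + 1)

/-- `Z₀`: ascending positions of zeros in `B*`. -/
def Z0 (ω : ℕ) : List ℕ := posOf (extBin ω) false

/-- `Z₁`: ascending positions of ones in `B*`. -/
def Z1 (ω : ℕ) : List ℕ := posOf (extBin ω) true

/-- Bitonic permutation `P_b = Z₀ ++ reverse Z₁`. -/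
def Pb (ω : ℕ) : List ℕ := Z0 ω ++ (Z1 ω).reverse

/-- The self-inverting permutation `P_s`: it pairs the elements of `P_b`
equidistant from its extremes, i.e. `P_s (b_{2n+2-i}) = b_i`. -/
def Ps (ω : ℕ) (x : ℕ) : ℕ :=
  (Pb ω).getD ((Pb ω).length - 1 - (Pb ω).idxOf x) 0

/-- `posOf` distributes over append, with a shift. -/
lemma posOf_append (l₁ l₂ : List Bool) (b : Bool) :
    posOf (l₁ ++ l₂) b = posOf l₁ b ++ (posOf l₂ b).map (· + l₁.length) := by
  unfold posOf
  rw [List.length_append, List.range_add, List.filter_append, List.map_append]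
  congr 1
  · congr 1
    apply List.filter_congr
    intro i hi
    rw [List.mem_range] at hi
    rw [List.getD_append _ _ _ _ hi]
  · rw [List.filter_map, List.map_map, List.map_map]
    congr 1
    · funext j
      simp only [Function.comp_apply]
      omega
    · apply List.filter_congr
      intro i _
      simp only [Function.comp_apply]
      rw [List.getD_append_right _ _ _ _ (Nat.le_add_right _ _), Nat.add_sub_cancel_left]

lemma posOf_replicate_true (n : ℕ) :
    posOf (List.replicate n true) true = (List.range n).map (· + 1) := by
  unfold posOf
  rw [List.length_replicate]
  congr 1
  rw [List.filter_eq_self]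
  intro i hi
  rw [List.mem_range] at hi
  simp [List.getD, List.getElem?_replicate, hi]

lemma posOf_replicate_true_false (n : ℕ) :
    posOf (List.replicate n true) false = [] := by
  unfold posOf
  rw [List.length_replicate]
  have : ((List.range n).filter
      (fun i => (List.replicate n true).getD i false == false)) = [] := by
    rw [List.filter_eq_nil_iff]
    intro i hi
    rw [List.mem_range] at hi
    simp [List.getD, List.getElem?_replicate, hi]
  rw [this]; rfl

lemma posOf_lengths (t : List Bool) :
    (posOf t false).length + (posOf t true).length = t.length := by
  unfold posOf
  rw [List.length_map, List.length_map]
  have h := List.length_eq_length_filter_add (l := List.range t.length)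
      (fun i => t.getD i false == true)
  rw [List.length_range] at h
  have : (List.range t.length).filter (fun i => t.getD i false == false)
      = (List.range t.length).filter (fun i => !(t.getD i false == true)) := by
    apply List.filter_congr
    intro i _
    cases t.getD i false <;> rfl
  rw [this]
  omega

/-- For `1 ≤ i ≤ n`, the `(n+1+i)`-th element of `P_b` equals `n-i+1`;
equivalently the last `n` elements of `P_b`, right to left, are `1,…,n`. -/
theorem stmt7 (ω n : ℕ) (hω : 0 < ω) (hn : (binRep ω).length = n) :
    ∀ i, 1 ≤ i → i ≤ n → (Pb ω).getD (n + i) 0 = n - i + 1 := by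
  intro i hi1 hin
  set t : List Bool := (binRep ω).map (!·) ++ [false] with ht
  have htlen : t.length = n + 1 := by simp [ht, hn]
  have hext : extBin ω = List.replicate n true ++ t := by
    rw [extBin, hn, ht, List.append_assoc]
  have hZ1 : Z1 ω = (List.range n).map (· + 1) ++ (posOf t true).map (· + n) := by
    rw [Z1, hext, posOf_append, posOf_replicate_true, List.length_replicate]
  have hZ0 : Z0 ω = (posOf t false).map (· + n) := by
    rw [Z0, hext, posOf_append, posOf_replicate_true_false, List.length_replicate,
      List.nil_append]
  have hPb : Pb ω = (Z0 ω ++ ((posOf t true).map (· + n)).reverse)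
      ++ ((List.range n).map (· + 1)).reverse := by
    rw [Pb, hZ1, List.reverse_append, List.append_assoc]
  have hlen : (Z0 ω ++ ((posOf t true).map (· + n)).reverse).length = n + 1 := by
    rw [List.length_append, hZ0, List.length_map, List.length_reverse, List.length_map]
    rw [posOf_lengths t] at *
    omega
  rw [hPb, List.getD_append_right _ _ _ _ (by omega : _ ≤ n + i), hlen]
  have hlt : n + i - (n + 1) < (((List.range n).map (· + 1)).reverse).length := by
    simp; omega
  rw [List.getD_eq_getElem _ _ hlt, List.getElem_reverse]
  simp only [List.getElem_map, List.getElem_range, List.length_map, List.length_range]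
  omega
end

section
/- The sequence P_b = Z₀ ++ reverse(Z₁) is a bitonic permutation of {1,...,2n+1}: all of its 2n+1 elements are distinct elements of {1,...,2n+1}, its first |Z₀| elements are strictly increasing, and its remaining elements are strictly decreasing. -/
lemma posOf_sorted (l : List Bool) (b : Bool) : List.Pairwise (· < ·) (posOf l b) := by
  unfold posOf
  exact ((List.pairwise_lt_range.filter _).map _ (fun a b h => by omega))

lemma posOf_mem {l : List Bool} {b : Bool} {x : ℕ} (hx : x ∈ posOf l b) :
    1 ≤ x ∧ x ≤ l.length := by
  unfold posOf at hx
  simp only [List.mem_map, List.mem_filter, List.mem_range] at hx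
  obtain ⟨i, ⟨hi, _⟩, rfl⟩ := hx
  omega

lemma posOf_nodup (l : List Bool) (b : Bool) : (posOf l b).Nodup :=
  (posOf_sorted l b).nodup

lemma posOf_disjoint (l : List Bool) : List.Disjoint (posOf l false) (posOf l true) := by
  intro x h1 h2
  unfold posOf at h1 h2
  simp only [List.mem_map, List.mem_filter, List.mem_range] at h1 h2
  obtain ⟨i, ⟨_, hbi⟩, hi⟩ := h1
  obtain ⟨j, ⟨_, hbj⟩, hj⟩ := h2
  have : i = j := by omega
  subst this
  simp_all

lemma posOf_length (l : List Bool) : (posOf l false).length + (posOf l true).length = l.length := by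
  unfold posOf
  simp only [List.length_map]
  have := List.length_eq_length_filter_add (l := List.range l.length)
    (fun i => l.getD i false == true)
  simp only [List.length_range] at this
  rw [add_comm]
  convert this.symm using 3
  ext i
  cases h : l.getD i false <;> simp [h]

/-- `P_b` is a bitonic permutation of `{1,…,2n+1}`: its `2n+1` elements are distinct
elements of `{1,…,2n+1}`, its first `|Z₀|` elements strictly increase, and its
remaining elements strictly decrease. -/
theorem stmt8 (ω n : ℕ) (hω : 0 < ω) (hn : (binRep ω).length = n) :
    (Pb ω).length = 2*n+1 ∧ (Pb ω).Nodup ∧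
    (∀ x ∈ Pb ω, x ∈ Finset.Icc 1 (2*n+1)) ∧
    List.Pairwise (· < ·) ((Pb ω).take (Z0 ω).length) ∧
    List.Pairwise (· > ·) ((Pb ω).drop (Z0 ω).length) := by
  have hlen : (extBin ω).length = 2*n+1 := by
    simp [extBin, hn]; omega
  have hsum := posOf_length (extBin ω)
  rw [hlen] at hsum
  have htake : (Pb ω).take (Z0 ω).length = Z0 ω := by
    simp [Pb]
  have hdrop : (Pb ω).drop (Z0 ω).length = (Z1 ω).reverse := by
    simp [Pb]
  refine ⟨?_, ?_, ?_, ?_, ?_⟩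
  · simp [Pb, Z0, Z1]; omega
  · rw [Pb, List.nodup_append]
    exact ⟨posOf_nodup _ _, List.nodup_reverse.mpr (posOf_nodup _ _),
      fun x h1 y h2 hxy => posOf_disjoint _ h1 (List.mem_reverse.mp (hxy ▸ h2))⟩
  · intro x hx
    rw [Pb, List.mem_append, List.mem_reverse] at hx
    rcases hx with h | h <;>
      · have := posOf_mem h; rw [hlen] at this; simp [Finset.mem_Icc]; omega
  · rw [htake]; exact posOf_sorted _ _
  · rw [hdrop]
    exact List.pairwise_reverse.mpr (posOf_sorted _ _)
end

section
/- Let ω be an n-bit key with fixed point f of its self-inverting permutation P_s. Then P_s(i) = n+i for every 1 ≤ i ≤ f−n−1, and P_s(n+i) = i for every 1 ≤ i ≤ f−n−1. -/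
open List

private lemma getD_reverse' (l : List ℕ) (j : ℕ) (h : j < l.length) :
    l.reverse.getD j 0 = l.getD (l.length - 1 - j) 0 := by
  rw [getD_eq_getElem _ _ (by simpa using h), getElem_reverse,
    getD_eq_getElem _ _ (by omega)]

private lemma indexOf_eq_of_getD {l : List ℕ} (hl : l.Nodup) {k x : ℕ}
    (hk : k < l.length) (h : l.getD k 0 = x) : l.idxOf x = k := by
  rw [getD_eq_getElem _ _ hk] at h
  have hmem : x ∈ l := h ▸ l.getElem_mem hk
  have h1 : List.idxOf x l < l.length := idxOf_lt_length_iff.2 hmem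
  have h2 := getElem_idxOf h1
  exact (hl.getElem_inj_iff).1 (by rw [h2, ← h])

private lemma exists_t (B : List Bool) : ∃ t, t ≤ B.length ∧
    (∀ j, j < t → B.getD j false = true) ∧ (t < B.length → B.getD t false = false) := by
  refine ⟨B.findIdx (· == false), findIdx_le_length, ?_, ?_⟩
  · intro j hj
    have hjn : j < B.length := lt_of_lt_of_le hj findIdx_le_length
    rw [getD_eq_getElem _ _ hjn]
    have := not_of_lt_findIdx (p := (· == false)) (xs := B) hj
    simpa using this
  · intro h
    rw [getD_eq_getElem _ _ h]
    have := findIdx_getElem (p := (· == false)) (xs := B) (w := h)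
    simpa using this

private lemma key (B : List Bool) (n t : ℕ) (hn : B.length = n) (ht : t ≤ n)
    (htrue : ∀ j, j < t → B.getD j false = true)
    (hfalse : t < n → B.getD t false = false) :
    (posOf (List.replicate n true ++ B.map (!·) ++ [false]) false ++
      (posOf (List.replicate n true ++ B.map (!·) ++ [false]) true).reverse).length = 2*n+1 ∧
    (posOf (List.replicate n true ++ B.map (!·) ++ [false]) false ++
      (posOf (List.replicate n true ++ B.map (!·) ++ [false]) true).reverse).Nodup ∧
    (posOf (List.replicate n true ++ B.map (!·) ++ [false]) false ++
      (posOf (List.replicate n true ++ B.map (!·) ++ [false]) true).reverse).getD n 0 = n+t+1 ∧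
    (∀ i, 1 ≤ i → i ≤ t →
      (posOf (List.replicate n true ++ B.map (!·) ++ [false]) false ++
        (posOf (List.replicate n true ++ B.map (!·) ++ [false]) true).reverse).getD (i-1) 0 = n+i ∧
      (posOf (List.replicate n true ++ B.map (!·) ++ [false]) false ++
        (posOf (List.replicate n true ++ B.map (!·) ++ [false]) true).reverse).getD (2*n+1-i) 0 = i) := by
  set L : List Bool := List.replicate n true ++ B.map (!·) ++ [false] with hLdef
  have hL : L.length = 2*n+1 := by simp [hLdef, hn]; omega
  -- pointwise values
  have hLlt : ∀ j, j < n → L.getD j false = true := by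
    intro j hj
    rw [hLdef, List.append_assoc, getD_append _ _ _ j (by simpa using hj),
      getD_eq_getElem _ _ (by simpa using hj), getElem_replicate]
  have hLmid : ∀ j, n ≤ j → j < 2*n → L.getD j false = !(B.getD (j-n) false) := by
    intro j h1 h2
    rw [hLdef, List.append_assoc, getD_append_right _ _ _ _ (by simpa using h1),
      length_replicate, getD_append _ _ _ _ (by simp [hn]; omega),
      getD_eq_getElem _ _ (by simp [hn]; omega), getElem_map,
      getD_eq_getElem _ _ (by simp [hn]; omega)]
  have hLlast : L.getD (2*n) false = false := by
    rw [hLdef, List.append_assoc,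
      getD_append_right _ _ _ _ (by simp only [length_replicate]; omega),
      length_replicate, getD_append_right _ _ _ _ (by simp only [length_map, hn]; omega),
      length_map, hn]
    have e : 2*n - n - n = 0 := by omega
    rw [e]
    rfl
  set p : ℕ → Bool := fun i => L.getD i false == false with hp
  set q : ℕ → Bool := fun i => L.getD i false == true with hq
  have hpq : ∀ a, p a = !q a := by
    intro a; simp only [hp, hq]; cases L.getD a false <;> rfl
  -- range decomposition
  have h1 : range' n t ++ range' (n+t) (n+1-t) = range' n (n+1) := by
    have := range'_append (s := n) (m := t) (n := n+1-t) (step := 1)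
    simp only [one_mul] at this
    rw [this]; congr 1; omega
  have h2 : range' 0 n ++ range' n (n+1) = range' 0 (2*n+1) := by
    have := range'_append (s := 0) (m := n) (n := n+1) (step := 1)
    simp only [one_mul, Nat.zero_add] at this
    rw [this]; congr 1; omega
  have hrange : range (2*n+1) = range' 0 n ++ (range' n t ++ range' (n+t) (n+1-t)) := by
    rw [h1, range_eq_range', ← h2]
  have hfA : filter p (range' 0 n) = [] := by
    rw [filter_eq_nil_iff]
    intro a ha
    have := mem_range'_1.1 ha
    simp only [hp]
    rw [hLlt a (by omega)]
    simp
  have hfB : filter p (range' n t) = range' n t := by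
    rw [filter_eq_self]
    intro a ha
    have h3 := mem_range'_1.1 ha
    have h4 : L.getD a false = !(B.getD (a-n) false) := hLmid a (by omega) (by omega)
    simp only [hp]
    rw [h4, htrue (a-n) (by omega)]
    rfl
  have hfC : filter q (range' 0 n) = range' 0 n := by
    rw [filter_eq_self]
    intro a ha
    have := mem_range'_1.1 ha
    simp only [hq]
    rw [hLlt a (by omega)]
    rfl
  have hfD : filter q (range' n t) = [] := by
    rw [filter_eq_nil_iff]
    intro a ha
    have h3 := mem_range'_1.1 ha
    have h4 : L.getD a false = !(B.getD (a-n) false) := hLmid a (by omega) (by omega)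
    simp only [hq]
    rw [h4, htrue (a-n) (by omega)]
    simp
  set R0 : List ℕ := filter p (range' (n+t) (n+1-t)) with hR0
  set R1 : List ℕ := filter q (range' (n+t) (n+1-t)) with hR1
  have hmap : ∀ s m : ℕ, map (· + 1) (range' s m) = range' (s+1) m := by
    intro s m
    have := map_add_range' (a := 1) s m 1
    simpa [Nat.add_comm] using this
  have hZ0 : posOf L false = range' (n+1) t ++ map (· + 1) R0 := by
    rw [posOf, hL, hrange]
    show map (· + 1) (filter p _) = _
    rw [filter_append, filter_append, hfA, hfB, nil_append, map_append, hmap]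
  have hZ1 : posOf L true = range' 1 n ++ map (· + 1) R1 := by
    rw [posOf, hL, hrange]
    show map (· + 1) (filter q _) = _
    rw [filter_append, filter_append, hfC, hfD, nil_append, map_append, hmap]
  have hlenR : R0.length + R1.length = n+1-t := by
    have := length_eq_length_filter_add (l := range' (n+t) (n+1-t)) q
    rw [← hR1] at this
    have e : filter (fun a => !q a) (range' (n+t) (n+1-t)) = R0 := by
      rw [hR0]; congr 1; funext a; rw [hpq]
    rw [e] at this
    simp at this
    omega
  set z0 : ℕ := (posOf L false).length with hz0
  set z1 : ℕ := (posOf L true).length with hz1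
  have hz0v : z0 = t + R0.length := by rw [hz0, hZ0]; simp
  have hz1v : z1 = n + R1.length := by rw [hz1, hZ1]; simp
  have hzsum : z0 + z1 = 2*n+1 := by omega
  set P : List ℕ := posOf L false ++ (posOf L true).reverse with hP
  have hPlen : P.length = 2*n+1 := by rw [hP]; simp [← hz0, ← hz1]; omega
  -- Nodup
  have hmemZ : ∀ b x, x ∈ posOf L b → 1 ≤ x ∧ L.getD (x-1) false = b := by
    intro b x hx
    rw [posOf] at hx
    simp only [mem_map, mem_filter, mem_range] at hx
    obtain ⟨a, ⟨_, ha2⟩, rfl⟩ := hx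
    refine ⟨by omega, ?_⟩
    simpa using ha2
  have hnodupZ : ∀ b : Bool, (posOf L b).Nodup := by
    intro b
    exact (nodup_range.filter _).map (fun a b h => by omega)
  have hPnodup : P.Nodup := by
    rw [hP]
    refine (hnodupZ false).append (nodup_reverse.2 (hnodupZ true)) ?_
    intro x hx0 hx1
    have e0 := hmemZ false x hx0
    have e1 := hmemZ true x (by simpa using hx1)
    rw [e0.2] at e1
    exact absurd e1.2 (by simp)
  -- middle value
  have hmid : P.getD n 0 = n+t+1 := by
    rcases eq_or_lt_of_le ht with heq | htn
    · -- t = n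
      have hR0v : R0 = [2*n] := by
        rw [hR0, heq]
        have e1 : n+1-n = 1 := by omega
        rw [e1]
        have e2 : range' (n+n) 1 = [2*n] := by
          rw [range'_one]
          congr 1
          omega
        rw [e2]
        have hp2n : p (2*n) = true := by
          simp only [hp]
          rw [hLlast]
          rfl
        rw [filter_cons_of_pos hp2n, filter_nil]
      have hmap1 : map (· + 1) ([2*n] : List ℕ) = [(n+1)+1*n] := by
        simp
        omega
      have hZ0' : posOf L false = range' (n+1) (n+1) := by
        rw [hZ0, hR0v, heq, hmap1, ← range'_concat]
      rw [hP, getD_append _ _ _ _ (by rw [hZ0', length_range']; omega),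
        hZ0', getD_eq_getElem _ _ (by rw [length_range']; omega), getElem_range']
      omega
    · -- t < n
      have hR1cons : ∃ R1', R1 = (n+t) :: R1' := by
        rw [hR1]
        have e : n+1-t = (n-t)+1 := by omega
        rw [e, range'_succ]
        have hqnt : q (n+t) = true := by
          have hval : L.getD (n+t) false = !(B.getD t false) := by
            have := hLmid (n+t) (by omega) (by omega)
            simpa using this
          simp only [hq]
          rw [hval, hfalse htn]
          rfl
        rw [filter_cons_of_pos hqnt]
        exact ⟨_, rfl⟩
      obtain ⟨R1', hR1'⟩ := hR1cons
      have hz0n : z0 ≤ n := by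
        have : 1 ≤ R1.length := by rw [hR1']; simp
        omega
      rw [hP, getD_append_right _ _ _ _ (by rw [← hz0]; omega), ← hz0,
        getD_reverse' _ _ (by rw [← hz1]; omega), ← hz1]
      have e : z1 - 1 - (n - z0) = n := by omega
      rw [e, hZ1, getD_append_right _ _ _ _ (by simp), length_range']
      have e2 : n - n = 0 := Nat.sub_self n
      rw [e2, hR1']
      simp
  refine ⟨hPlen, hPnodup, hmid, ?_⟩
  intro i hi1 hit
  constructor
  · rw [hP, getD_append _ _ _ _ (by rw [← hz0]; omega), hZ0,
      getD_append _ _ _ _ (by simp; omega), getD_eq_getElem _ _ (by simp; omega),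
      getElem_range']
    omega
  · have hiz : z0 ≤ 2*n+1-i := by omega
    rw [hP, getD_append_right _ _ _ _ (by rw [← hz0]; omega), ← hz0,
      getD_reverse' _ _ (by rw [← hz1]; omega), ← hz1]
    have e : z1 - 1 - (2*n+1-i-z0) = i - 1 := by omega
    rw [e, hZ1, getD_append _ _ _ _ (by simp; omega),
      getD_eq_getElem _ _ (by simp; omega), getElem_range']
    omega

/-- With `f` the fixed point of `P_s`: `P_s i = n + i` and `P_s (n+i) = i`
for every `1 ≤ i ≤ f - n - 1`. -/
theorem stmt12 (ω n : ℕ) (hω : 0 < ω) (hn : (binRep ω).length = n) :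
    ∀ i, 1 ≤ i → i + n + 1 ≤ (Pb ω).getD n 0 →
      Ps ω i = n + i ∧ Ps ω (n + i) = i := by
  intro i hi hcond
  set B : List Bool := binRep ω with hB
  obtain ⟨t, ht, htrue, hfalse⟩ := exists_t B
  rw [hn] at ht hfalse
  have hext : extBin ω = List.replicate n true ++ B.map (!·) ++ [false] := by
    rw [extBin, hn]
  obtain ⟨hPlen, hPnodup, hmid, hpair⟩ := key B n t hn ht htrue hfalse
  have hPb : Pb ω = posOf (List.replicate n true ++ B.map (!·) ++ [false]) false ++
      (posOf (List.replicate n true ++ B.map (!·) ++ [false]) true).reverse := by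
    rw [Pb, Z0, Z1, hext]
  rw [hPb] at hcond
  rw [hmid] at hcond
  have hit : i ≤ t := by omega
  obtain ⟨hA, hB2⟩ := hpair i hi hit
  have hidx1 : (posOf (List.replicate n true ++ B.map (!·) ++ [false]) false ++
      (posOf (List.replicate n true ++ B.map (!·) ++ [false]) true).reverse).idxOf i = 2*n+1-i :=
    indexOf_eq_of_getD hPnodup (by omega) hB2
  have hidx2 : (posOf (List.replicate n true ++ B.map (!·) ++ [false]) false ++
      (posOf (List.replicate n true ++ B.map (!·) ++ [false]) true).reverse).idxOf (n+i) = i-1 :=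
    indexOf_eq_of_getD hPnodup (by omega) hA
  constructor
  · rw [Ps, hPb, hPlen, hidx1]
    have e : 2*n+1-1-(2*n+1-i) = i - 1 := by omega
    rw [e, hA]
  · rw [Ps, hPb, hPlen, hidx2]
    have e : 2*n+1-1-(i-1) = 2*n+1-i := by omega
    rw [e, hB2]
end

section
/- For any n-bit key ω (n ≥ 1), the self-inverting permutation P_s satisfies P_s(1) = n+1 and P_s(n+1) = 1. -/
lemma bits_ne_nil {m : ℕ} (hm : 0 < m) : Nat.bits m ≠ [] := by
  intro hnil
  have h1 := Nat.size_eq_bits_len m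
  have h2 := Nat.size_pos.mpr hm
  rw [hnil] at h1; simp at h1; omega

lemma bits_getLast : ∀ m : ℕ, 0 < m → (Nat.bits m).getLast? = some true := by
  intro m
  induction m using Nat.binaryRec with
  | zero => intro h; omega
  | bit b n ih =>
    intro h
    rcases Nat.eq_zero_or_pos n with hn | hn
    · subst hn
      have hb : b = true := by
        cases b
        · simp [Nat.bit] at h
        · rfl
      subst hb
      simp
    · rw [Nat.bits_append_bit n b (fun h0 => absurd h0 hn.ne')]
      rw [List.getLast?_cons, ih hn]
      simp

/-- `P_s 1 = n+1` and `P_s (n+1) = 1`. -/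
theorem stmt13 (ω n : ℕ) (hω : 0 < ω) (hn : (binRep ω).length = n) (hn1 : 1 ≤ n) :
    Ps ω 1 = n + 1 ∧ Ps ω (n + 1) = 1 := by
  -- basic getD facts about extBin
  have hhead : (binRep ω).getD 0 false = true := by
    have h := bits_getLast ω hω
    simp [binRep]
    rw [← List.head?_eq_getElem?, List.head?_reverse, h]
    rfl
  have hlen : (extBin ω).length = 2 * n + 1 := by simp [extBin, hn]; omega
  have htrue : ∀ i, i < n → (extBin ω).getD i false = true := fun i hi => by
    simp [extBin, List.getD_eq_getElem?_getD, List.getElem?_append, hn, hi]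
  have hfalse : (extBin ω).getD n false = false := by
    simp [extBin, List.getD_eq_getElem?_getD, List.getElem?_append, hn]
    have hl : 0 < (binRep ω).length := by omega
    have hb : (binRep ω)[0]'hl = true := by
      rw [List.getD_eq_getElem _ _ hl] at hhead; exact hhead
    rw [List.getElem_append_left (by rw [List.length_map]; exact hl)]
    simp [hb, List.getElem_append, hl]
  have hPt : ∀ i, i < n → ((extBin ω).getD i false == false) = false := by
    intro i hi; rw [htrue i hi]; rfl
  have hPn : ((extBin ω).getD n false == false) = true := by rw [hfalse]; rfl
  have hQ0 : ((extBin ω).getD 0 false == true) = true := by rw [htrue 0 hn1]; rfl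
  -- Z0 structure
  obtain ⟨t0, ht0⟩ : ∃ t0, Z0 ω = (n + 1) :: t0 := by
    rw [Z0, posOf, hlen, show 2 * n + 1 = n + (n + 1) by omega, List.range_add]
    rw [List.filter_append]
    have h1 : (List.range n).filter (fun i => (extBin ω).getD i false == false) = [] := by
      rw [List.filter_eq_nil_iff]
      intro i hi
      rw [List.mem_range] at hi
      simp only [hPt i hi, Bool.false_eq_true, not_false_eq_true]
    rw [h1, List.nil_append, List.range_succ_eq_map, List.map_cons, List.filter_cons]
    simp only [Nat.add_zero]
    rw [if_pos hPn]
    exact ⟨_, rfl⟩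
  have h1Z0 : (1 : ℕ) ∉ Z0 ω := by
    intro h
    simp only [Z0, posOf, List.mem_map, List.mem_filter, List.mem_range] at h
    obtain ⟨i, ⟨-, hpi⟩, hi1⟩ := h
    have : i = 0 := by omega
    subst this
    rw [htrue 0 hn1] at hpi
    exact absurd hpi (by simp)
  -- Z1 structure
  obtain ⟨t1, ht1, h1t1⟩ : ∃ t1, Z1 ω = 1 :: t1 ∧ (1 : ℕ) ∉ t1 := by
    rw [Z1, posOf, hlen, show 2 * n + 1 = (2 * n) + 1 by omega, List.range_succ_eq_map]
    rw [List.filter_cons, if_pos hQ0]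
    refine ⟨List.map (· + 1) (List.filter (fun i => (extBin ω).getD i false == true)
      (List.map Nat.succ (List.range (2 * n)))), by simp, ?_⟩
    intro h
    simp only [List.mem_map, List.mem_filter, List.mem_map, List.mem_range] at h
    obtain ⟨i, ⟨⟨j, -, hj⟩, -⟩, hi1⟩ := h
    omega
  -- lengths
  have hsum : (Z0 ω).length + (Z1 ω).length = 2 * n + 1 := by
    have hlf := List.length_eq_length_filter_add
      (l := List.range (2 * n + 1)) (fun i => (extBin ω).getD i false == true)
    have hfeq : (List.range (2 * n + 1)).filter (fun i => (extBin ω).getD i false == false)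
        = (List.range (2 * n + 1)).filter
            (fun i => !((extBin ω).getD i false == true)) := by
      apply List.filter_congr
      intro i _
      cases h : (extBin ω).getD i false <;> simp [h]
    simp only [Z0, Z1, posOf, hlen, List.length_map]
    rw [hfeq]
    simp only [List.length_range] at hlf
    omega
  -- assemble Pb
  set A : List ℕ := (n + 1) :: (t0 ++ t1.reverse) with hA
  have hPb : Pb ω = A ++ [1] := by
    rw [Pb, ht0, ht1]
    simp [hA]
  have hAlen : A.length = 2 * n := by
    have e0 : (Z0 ω).length = t0.length + 1 := by rw [ht0]; simp
    have e1 : (Z1 ω).length = t1.length + 1 := by rw [ht1]; simp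
    simp only [hA, List.length_cons, List.length_append, List.length_reverse]
    omega
  have hPblen : (Pb ω).length = 2 * n + 1 := by
    rw [hPb]; simp [hAlen]
  have h1A : (1 : ℕ) ∉ A := by
    simp only [hA, List.mem_cons, List.mem_append, List.mem_reverse]
    push_neg
    refine ⟨by omega, ?_, h1t1⟩
    intro h
    exact h1Z0 (by rw [ht0]; exact List.mem_cons_of_mem _ h)
  have hidx1 : (Pb ω).idxOf 1 = 2 * n := by
    rw [hPb, List.idxOf_append_of_notMem h1A]
    simp [hAlen]
  have hidxn : (Pb ω).idxOf (n + 1) = 0 := by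
    rw [hPb, hA]
    exact List.idxOf_cons_self
  constructor
  · rw [Ps, hidx1, hPblen]
    have h0 : 2 * n + 1 - 1 - 2 * n = 0 := by omega
    rw [h0, hPb, hA]
    rfl
  · rw [Ps, hidxn, hPblen]
    have h0 : 2 * n + 1 - 1 - 0 = 2 * n := by omega
    rw [h0, hPb, ← hAlen]
    rw [List.getD_eq_getElem?_getD, List.getElem?_append_right (le_refl _)]
    simp
end

section
/- Let ω be an n-bit key with n₁ ones in its binary representation, and let f be the fixed point of the associated self-inverting permutation P_s. If f ≠ 2n+1, then P_s(n₁+1) = 2n+1 and P_s(2n+1) = n₁+1. If f = 2n+1, then P_s(2n+1) = 2n+1. -/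
lemma map_getD_range (l : List Bool) :
    (List.range l.length).map (fun i => l.getD i false) = l := by
  apply List.ext_getElem
  · simp
  · intro i h1 h2
    simp [List.getD_eq_getElem _ _ h2, List.getElem?_eq_getElem h2]

lemma countF (l : List Bool) (b : Bool) :
    ((List.range l.length).filter (fun i => l.getD i false == b)).length = l.count b := by
  rw [← List.countP_eq_length_filter]
  conv_rhs => rw [← map_getD_range l]
  rw [List.count_eq_countP, List.countP_map]
  rfl

section Main
variable (ω n : ℕ)

lemma hext (hn : (binRep ω).length = n) :
    extBin ω = (List.replicate n true ++ (binRep ω).map (!·)) ++ [false] := by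
  rw [extBin, hn]

lemma hlenC (hn : (binRep ω).length = n) : ((binRep ω).map (!·)).length = n := by
  simp [hn]

lemma hlenExt (hn : (binRep ω).length = n) : (extBin ω).length = 2*n+1 := by
  rw [hext ω n hn]; simp [hlenC ω n hn]; omega

lemma hget1 (hn : (binRep ω).length = n) : ∀ i < n, (extBin ω).getD i false = true := by
  intro i hi
  rw [hext ω n hn, List.getD_append _ _ _ _ (by simp [hlenC ω n hn]; omega),
    List.getD_append _ _ _ _ (by simp; omega)]
  rw [List.getD_eq_getElem _ _ (by simp; omega)]
  simp

lemma hget2 (hn : (binRep ω).length = n) :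
    ∀ i < n, (extBin ω).getD (n+i) false = ((binRep ω).map (!·)).getD i false := by
  intro i hi
  rw [hext ω n hn, List.getD_append _ _ _ _ (by simp [hlenC ω n hn]; omega),
    List.getD_append_right _ _ _ _ (by simp)]
  simp

lemma hget3 (hn : (binRep ω).length = n) : (extBin ω).getD (2*n) false = false := by
  rw [hext ω n hn, List.getD_append_right _ _ _ _ (by simp [hlenC ω n hn]; omega)]
  have : 2*n - (List.replicate n true ++ (binRep ω).map (!·)).length = 0 := by
    simp [hlenC ω n hn]; omega
  rw [this]; rfl

lemma hrange : List.range (2*n+1) =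
    List.range n ++ ((List.range n).map (fun x => n + x) ++ [2*n]) := by
  rw [show 2*n+1 = n + (n+1) from by ring, List.range_add, List.range_succ, List.map_append]
  simp [show n + n = 2*n from by ring]

lemma hZ1 (hn : (binRep ω).length = n) :
    Z1 ω = (List.range n).map (· + 1) ++
      ((List.range n).filter (fun i => ((binRep ω).map (!·)).getD i false == true)).map
        (fun i => n + i + 1) := by
  rw [Z1, posOf, hlenExt ω n hn, hrange, List.filter_append, List.filter_append]
  rw [List.filter_eq_self.mpr (fun i hi => by rw [hget1 ω n hn i (List.mem_range.mp hi)]; rfl),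
    List.filter_map]
  have h2 : List.filter ((fun i => (extBin ω).getD i false == true) ∘ fun x => n + x)
      (List.range n) =
      List.filter (fun i => ((binRep ω).map (!·)).getD i false == true) (List.range n) := by
    apply List.filter_congr
    intro i hi
    simp only [Function.comp]
    rw [hget2 ω n hn i (List.mem_range.mp hi)]
  rw [h2]
  have h3 : List.filter (fun i => (extBin ω).getD i false == true) [2*n] = [] := by
    simp only [List.filter_singleton, hget3 ω n hn]; rfl
  rw [h3]
  simp [List.map_map, Function.comp, Nat.add_assoc]

lemma hZ0 (hn : (binRep ω).length = n) :
    Z0 ω = ((List.range n).filter (fun i => ((binRep ω).map (!·)).getD i false == false)).map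
        (fun i => n + i + 1) ++ [2*n+1] := by
  rw [Z0, posOf, hlenExt ω n hn, hrange, List.filter_append, List.filter_append]
  have h1 : List.filter (fun i => (extBin ω).getD i false == false) (List.range n) = [] := by
    rw [List.filter_eq_nil_iff]
    intro i hi
    rw [hget1 ω n hn i (List.mem_range.mp hi)]; simp
  rw [h1, List.filter_map]
  have h2 : List.filter ((fun i => (extBin ω).getD i false == false) ∘ fun x => n + x)
      (List.range n) =
      List.filter (fun i => ((binRep ω).map (!·)).getD i false == false) (List.range n) := by
    apply List.filter_congr
    intro i hi
    simp only [Function.comp]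
    rw [hget2 ω n hn i (List.mem_range.mp hi)]
  rw [h2]
  have h3 : List.filter (fun i => (extBin ω).getD i false == false) [2*n] = [2*n] := by
    simp only [List.filter_singleton, hget3 ω n hn]; rfl
  rw [h3]
  simp [List.map_map, Function.comp, Nat.add_assoc]

end Main

section Count
variable (ω n n₁ : ℕ)

lemma not_inj : Function.Injective Bool.not := by
  intro a b h; cases a <;> cases b <;> simp_all

lemma hcF (hn : (binRep ω).length = n) (b : Bool) :
    ((List.range n).filter (fun i => ((binRep ω).map (!·)).getD i false == b)).length
      = ((binRep ω).map (!·)).count b := by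
  have := countF ((binRep ω).map (!·)) b
  rwa [hlenC ω n hn] at this

lemma hcount_false (hn1 : (binRep ω).count true = n₁) :
    ((binRep ω).map (!·)).count false = n₁ := by
  have := List.count_map_of_injective (binRep ω) Bool.not not_inj true
  simpa [hn1] using this

lemma hcount_true (hn : (binRep ω).length = n) (hn1 : (binRep ω).count true = n₁) :
    ((binRep ω).map (!·)).count true = n - n₁ := by
  have h1 := List.count_map_of_injective (binRep ω) Bool.not not_inj false
  simp only [Bool.not_false] at h1
  rw [h1]
  have h2 : (binRep ω).count true + (binRep ω).count false = n := by
    rw [← hn, List.count_eq_countP, List.count_eq_countP,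
      List.length_eq_countP_add_countP (fun a => a == true)]
    congr 1
    apply List.countP_congr
    intro a _; cases a <;> simp
  omega

end Count

lemma getS (n i : ℕ) (hi : i < n) :
    (((List.range n).map (· + 1)).reverse).getD i 0 = n - i := by
  have h : i < (((List.range n).map (· + 1)).reverse).length := by simp; omega
  rw [List.getD_eq_getElem _ _ h, List.getElem_reverse]
  simp only [List.getElem_map, List.getElem_range, List.length_map, List.length_range]
  omega

lemma nodupS (n : ℕ) : (((List.range n).map (· + 1)).reverse).Nodup := by
  rw [List.nodup_reverse]
  exact (List.nodup_range (n := n)).map (add_left_injective 1)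

lemma idxS (n n₁ : ℕ) (h : n₁ < n) :
    List.idxOf (n₁+1) (((List.range n).map (· + 1)).reverse) = n - n₁ - 1 := by
  set S := ((List.range n).map (· + 1)).reverse with hS
  have h1 : n - n₁ - 1 < S.length := by rw [hS]; simp; omega
  have h2 : S[n - n₁ - 1] = n₁ + 1 := by
    have := getS n (n - n₁ - 1) (by omega)
    rw [List.getD_eq_getElem _ _ h1] at this
    rw [this]; omega
  have hmem : n₁ + 1 ∈ S := h2 ▸ List.getElem_mem h1
  have hlt : List.idxOf (n₁+1) S < S.length := List.idxOf_lt_length_iff.mpr hmem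
  have h3 : S[List.idxOf (n₁+1) S] = n₁ + 1 := List.getElem_idxOf hlt
  exact (nodupS n).getElem_inj_iff.mp (h3.trans h2.symm)

/-- With `n₁` the number of ones in `B` and `f = b_{n+1}` the fixed point of `P_s`:
if `f ≠ 2n+1` then `P_s (n₁+1) = 2n+1` and `P_s (2n+1) = n₁+1`;
if `f = 2n+1` then `P_s (2n+1) = 2n+1`. -/
theorem stmt14 (ω n n₁ : ℕ) (hω : 0 < ω) (hn : (binRep ω).length = n)
    (hn1 : (binRep ω).count true = n₁) :
    ((Pb ω).getD n 0 ≠ 2*n+1 →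
      Ps ω (n₁+1) = 2*n+1 ∧ Ps ω (2*n+1) = n₁+1) ∧
    ((Pb ω).getD n 0 = 2*n+1 → Ps ω (2*n+1) = 2*n+1) := by
  have hn1le : n₁ ≤ n := by
    rw [← hn, ← hn1]; exact List.count_le_length
  have hnpos : 0 < n := by
    rw [← hn]
    simp only [binRep, List.length_reverse]
    rw [Nat.size_eq_bits_len]
    exact Nat.pos_of_ne_zero (fun hz => absurd (Nat.size_eq_zero.mp hz) (by omega))
  set Ff := (List.range n).filter (fun i => ((binRep ω).map (!·)).getD i false == false) with hFf
  set Ft := (List.range n).filter (fun i => ((binRep ω).map (!·)).getD i false == true) with hFt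
  set A := Ff.map (fun i => n + i + 1) with hA
  set T := (Ft.map (fun i => n + i + 1)).reverse with hT
  set S := ((List.range n).map (· + 1)).reverse with hS
  have hPb : Pb ω = A ++ ((2*n+1) :: (T ++ S)) := by
    rw [Pb, hZ0 ω n hn, hZ1 ω n hn, List.reverse_append]
    rw [hA, hT, hS, hFf, hFt]
    simp [List.append_assoc]
  have hAlen : A.length = n₁ := by
    rw [hA, hFf]
    simp only [List.length_map]
    rw [hcF ω n hn false, hcount_false ω n₁ hn1]
  have hTlen : T.length = n - n₁ := by
    rw [hT, hFt]
    simp only [List.length_reverse, List.length_map]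
    rw [hcF ω n hn true, hcount_true ω n n₁ hn hn1]
  have hSlen : S.length = n := by rw [hS]; simp
  have hAmem : ∀ x ∈ A, n+1 ≤ x ∧ x ≤ 2*n := by
    intro x hx
    rw [hA] at hx
    simp only [List.mem_map] at hx
    obtain ⟨i, hi, rfl⟩ := hx
    rw [hFf] at hi
    have := List.mem_range.mp (List.mem_filter.mp hi).1
    omega
  have hTmem : ∀ x ∈ T, n+1 ≤ x ∧ x ≤ 2*n := by
    intro x hx
    rw [hT, List.mem_reverse] at hx
    simp only [List.mem_map] at hx
    obtain ⟨i, hi, rfl⟩ := hx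
    rw [hFt] at hi
    have := List.mem_range.mp (List.mem_filter.mp hi).1
    omega
  have hPblen : (Pb ω).length = 2*n+1 := by
    rw [hPb]
    simp only [List.length_append, List.length_cons, hAlen, hTlen, hSlen]
    omega
  have hPbn1 : (Pb ω).getD n₁ 0 = 2*n+1 := by
    rw [hPb, List.getD_append_right _ _ _ _ (by rw [hAlen])]
    rw [hAlen]
    simp
  have hidx2 : (Pb ω).idxOf (2*n+1) = n₁ := by
    rw [hPb, List.idxOf_append_of_notMem (fun h => by have := hAmem _ h; omega),
      hAlen, List.idxOf_cons_self]
    omega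
  have hPs2n1 : Ps ω (2*n+1) = (Pb ω).getD (2*n - n₁) 0 := by
    rw [Ps, hPblen, hidx2, show 2*n+1-1-n₁ = 2*n - n₁ from by omega]
  rcases Nat.lt_or_ge n₁ n with hlt | hge
  · -- n₁ < n
    have hfne : (Pb ω).getD n 0 ≠ 2*n+1 := by
      rw [hPb, List.getD_append_right _ _ _ _ (by rw [hAlen]; omega), hAlen,
        show n - n₁ = (n - n₁ - 1) + 1 from by omega, List.getD_cons_succ,
        List.getD_append _ _ _ _ (by rw [hTlen]; omega)]
      have hk : n - n₁ - 1 < T.length := by rw [hTlen]; omega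
      have hmem : T.getD (n - n₁ - 1) 0 ∈ T := by
        rw [List.getD_eq_getElem _ _ hk]; exact List.getElem_mem hk
      have := hTmem _ hmem
      omega
    have hval : (Pb ω).getD (2*n - n₁) 0 = n₁+1 := by
      rw [hPb, List.getD_append_right _ _ _ _ (by rw [hAlen]; omega), hAlen,
        show 2*n - n₁ - n₁ = (2*n - 2*n₁ - 1) + 1 from by omega, List.getD_cons_succ,
        List.getD_append_right _ _ _ _ (by rw [hTlen]; omega), hTlen,
        show 2*n - 2*n₁ - 1 - (n - n₁) = n - n₁ - 1 from by omega, hS,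
        getS n (n - n₁ - 1) (by omega)]
      omega
    have hidx1 : (Pb ω).idxOf (n₁+1) = 2*n - n₁ := by
      rw [hPb, List.idxOf_append_of_notMem (fun h => by have := hAmem _ h; omega),
        List.idxOf_cons_ne _ (by omega : 2*n+1 ≠ n₁+1),
        List.idxOf_append_of_notMem (fun h => by have := hTmem _ h; omega),
        hS, idxS n n₁ hlt, hAlen, hTlen]
      omega
    refine ⟨fun _ => ⟨?_, ?_⟩, fun h => absurd h hfne⟩
    · rw [Ps, hPblen, hidx1, show 2*n+1-1-(2*n-n₁) = n₁ from by omega, hPbn1]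
    · rw [hPs2n1, hval]
  · -- n₁ = n
    have heq : n₁ = n := le_antisymm hn1le hge
    have hfix : (Pb ω).getD n 0 = 2*n+1 := heq ▸ hPbn1
    refine ⟨fun h => absurd hfix h, fun _ => ?_⟩
    rw [hPs2n1, show 2*n - n₁ = n₁ from by omega, hPbn1]
end
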